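/- Let $\Lambda > 0$ and $H = \sqrt{\Lambda/3}$. If $x > 0$ satisfies the cosmological-horizon condition $k(x) = 2H$, then $Dk(x) + \frac{2}{3}\Lambda = \dfrac{2m}{x^3}\,\psi(x)^{-6} > 0$; in particular $Dk(x) \geq -\frac{2}{3}\Lambda$. -/

import Mathlib

/-- Constant-mean-curvature slice of Schwarzschild–deSitter: let `Λ > 0` and
`H = √(Λ/3)`. If `x > 0` satisfies the cosmological-horizon condition
`k x = 2H`, then `Dk x + (2/3)Λ = (2m/x³) ψ(x)⁻⁶ > 0`; in particular
`Dk x ≥ -(2/3)Λ`. -/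
theorem cmc_cosmological_horizon_bound (m Λ : ℝ) (hm : 0 < m) (hΛ : 0 < Λ)
    (H : ℝ) (hH : H = Real.sqrt (Λ/3))
    (ψ k Dk : ℝ → ℝ)
    (hψ : ∀ x, ψ x = 1 + m/(2*x))
    (hk : ∀ x, k x = (2/x) * (1 - m/(2*x)) / (ψ x)^3)
    (hDk : ∀ x, Dk x = (ψ x)⁻¹^2 * deriv k x) :
    ∀ x : ℝ, 0 < x → k x = 2*H →
      Dk x + (2/3)*Λ = (2*m/x^3) * ((ψ x)^6)⁻¹ ∧
      0 < (2*m/x^3) * ((ψ x)^6)⁻¹ ∧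
      Dk x ≥ -((2/3)*Λ) := by
  intro x hx hhor
  have hx0 : x ≠ 0 := ne_of_gt hx
  have hden : (0:ℝ) < 2*x + m := by linarith
  have hden0 : (2*x + m) ≠ 0 := ne_of_gt hden
  have hψpos : 0 < ψ x := by rw [hψ]; positivity
  have hψ0 : ψ x ≠ 0 := ne_of_gt hψpos
  -- compute deriv k x
  have hu : HasDerivAt (fun y : ℝ => 8*y*(2*y-m)) (8*1 * (2*x-m) + 8*x*(2*1)) x := by
    simpa using ((hasDerivAt_id x).const_mul 8).fun_mul (((hasDerivAt_id x).const_mul 2).sub_const m)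
  have hv : HasDerivAt (fun y : ℝ => (2*y+m)^3) ((3:ℕ) * (2*x+m)^(3-1) * (2*1)) x := by
    simpa using (((hasDerivAt_id x).const_mul 2).add_const m).fun_pow 3
  have hv0 : ((2*x+m)^3 : ℝ) ≠ 0 := pow_ne_zero 3 hden0
  have hg : HasDerivAt (fun y : ℝ => 8*y*(2*y-m) / (2*y+m)^3)
      (((8*1 * (2*x-m) + 8*x*(2*1)) * (2*x+m)^3 - 8*x*(2*x-m) * ((3:ℕ) * (2*x+m)^(3-1) * (2*1))) /
        ((2*x+m)^3)^2) x := hu.div hv hv0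
  have heq : k =ᶠ[nhds x] (fun y : ℝ => 8*y*(2*y-m) / (2*y+m)^3) := by
    filter_upwards [lt_mem_nhds hx] with y hy
    have hy0 : y ≠ 0 := ne_of_gt hy
    have hyd : (2*y + m) ≠ 0 := by positivity
    rw [hk, hψ]
    field_simp
    ring
  have hderiv : deriv k x =
      ((8*1 * (2*x-m) + 8*x*(2*1)) * (2*x+m)^3 - 8*x*(2*x-m) * ((3:ℕ) * (2*x+m)^(3-1) * (2*1))) /
        ((2*x+m)^3)^2 := by
    rw [heq.deriv_eq, hg.deriv]
  -- horizon condition gives (2/3)Λ = (k x)^2 / 2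
  have hH2 : H^2 = Λ/3 := by
    rw [hH, Real.sq_sqrt (by positivity)]
  have hΛk : (2/3)*Λ = (k x)^2 / 2 := by
    rw [hhor]; nlinarith [hH2]
  have hkx : k x = 8*x*(2*x-m) / (2*x+m)^3 := by
    rw [hk, hψ]; field_simp; ring
  have hDkx : Dk x = (1 + m/(2*x))⁻¹^2 *
      (((8*1 * (2*x-m) + 8*x*(2*1)) * (2*x+m)^3 - 8*x*(2*x-m) * ((3:ℕ) * (2*x+m)^(3-1) * (2*1))) /
        ((2*x+m)^3)^2) := by
    rw [hDk, hderiv, hψ]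
  have hψx : ψ x = (2*x+m)/(2*x) := by rw [hψ]; field_simp
  have main : Dk x + (2/3)*Λ = (2*m/x^3) * ((ψ x)^6)⁻¹ := by
    rw [hDkx, hΛk, hkx, hψx]
    field_simp
    ring
  have hpos : 0 < (2*m/x^3) * ((ψ x)^6)⁻¹ := by positivity
  exact ⟨main, hpos, by linarith⟩
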